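/- Under the standing setup, let μ be a Borel probability measure on X whose support is an attractor. Then μ is a physical measure if and only if Basin(μ) includes m-almost all points of Basin(supp μ). -/

import Mathlib

open MeasureTheory Filter Topology Set Metric
open scoped NNReal ENNReal

/-- The (topological) support of a measure. -/
def msupp {X : Type*} [TopologicalSpace X] [MeasurableSpace X] (μ : Measure X) : Set X :=
  {x | ∀ U : Set X, IsOpen U → x ∈ U → 0 < μ U}

/-- The basin of a Borel probability measure `μ`: the points whose empirical measures
`(1/T) ∫₀^T δ_{f^t x} dt` converge weakly to `μ` as `T → ∞`. -/
def basinOf {X : Type*} [TopologicalSpace X] [MeasurableSpace X]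
    (f : ℝ → X → X) (μ : Measure X) : Set X :=
  {x | ∀ g : BoundedContinuousFunction X ℝ,
    Tendsto (fun T : ℝ => (1 / T) * ∫ t in (0:ℝ)..T, g (f t x)) atTop
      (𝓝 (∫ y, g y ∂μ))}

/-- The basin of attraction of a set `A`. -/
def basinSet {X : Type*} [MetricSpace X] (f : ℝ → X → X) (A : Set X) : Set X :=
  {x | Tendsto (fun t : ℝ => infDist (f t x) A) atTop (𝓝 0)}

/-- `μ` is a physical measure (w.r.t. the reference measure `m` and semiflow `f`):
a compactly supported Borel probability measure such that `Basin(μ)` includes `m`-almost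
all points of some open neighbourhood of `supp μ`. -/
def PhysicalMeasure {X : Type*} [TopologicalSpace X] [MeasurableSpace X]
    (m : Measure X) (f : ℝ → X → X) (μ : Measure X) : Prop :=
  IsProbabilityMeasure μ ∧ IsCompact (msupp μ) ∧
    ∃ U : Set X, IsOpen U ∧ msupp μ ⊆ U ∧ m (U \ basinOf f μ) = 0

/-- If the orbit of `x` eventually hits the basin of `μ` (at time `s`), then `x` itself
is in the basin of `μ`: time averages are insensitive to a finite time shift. -/
lemma shift_mem_basinOf {X : Type*} [MetricSpace X] [MeasurableSpace X]
    {f : ℝ → X → X}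
    (hfadd : ∀ s t : ℝ, 0 ≤ s → 0 ≤ t → f (s + t) = f s ∘ f t)
    (hcont : ContinuousOn (fun p : ℝ × X => f p.1 p.2) (Set.Ici 0 ×ˢ Set.univ))
    (μ : Measure X) {x : X} {s : ℝ} (hs : 0 ≤ s)
    (hx : f s x ∈ basinOf f μ) : x ∈ basinOf f μ := by
  intro g
  have hI := hx g
  set φ : ℝ → ℝ := fun t => g (f t x) with hφ
  have hflowcont : ContinuousOn (fun t => f t x) (Set.Ici 0) := by
    have hc : ContinuousOn (fun t : ℝ => ((t, x) : ℝ × X)) (Set.Ici 0) :=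
      (continuous_id.prodMk continuous_const).continuousOn
    exact hcont.comp hc (fun t ht => ⟨ht, Set.mem_univ x⟩)
  have hφcont : ContinuousOn φ (Set.Ici 0) := g.continuous.comp_continuousOn hflowcont
  have hint : ∀ a b : ℝ, 0 ≤ a → 0 ≤ b → IntervalIntegrable φ volume a b := by
    intro a b ha hb
    refine (hφcont.mono ?_).intervalIntegrable
    intro y hy
    rcases Set.mem_uIcc.mp hy with h | h
    · exact ha.trans h.1
    · exact hb.trans h.1
  -- error terms
  set G : ℝ → ℝ := fun T => (1 / T) * (∫ t in (0:ℝ)..s, φ t) -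
      (1 / T) * (∫ t in T..(T + s), φ t) with hG
  have hG0 : Tendsto G atTop (𝓝 0) := by
    have h1 : Tendsto (fun T : ℝ => (1 / T) * (∫ t in (0:ℝ)..s, φ t)) atTop (𝓝 0) := by
      have h := (tendsto_const_nhds (x := ∫ t in (0:ℝ)..s, φ t)).div_atTop
        (tendsto_id (α := ℝ))
      refine h.congr fun T => ?_
      rw [one_div_mul_eq_div]
      rfl
    have h2 : Tendsto (fun T : ℝ => (1 / T) * ∫ t in T..(T + s), φ t) atTop (𝓝 0) := by
      apply squeeze_zero_norm' (a := fun T : ℝ => (‖g‖ * s) / T)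
      · filter_upwards [eventually_gt_atTop (0 : ℝ)] with T hT
        have hb : ‖∫ t in T..(T + s), φ t‖ ≤ ‖g‖ * |T + s - T| := by
          apply intervalIntegral.norm_integral_le_of_norm_le_const
          intro y _
          exact g.norm_coe_le_norm _
        have : |T + s - T| = s := by
          rw [add_sub_cancel_left, abs_of_nonneg hs]
        rw [this] at hb
        rw [norm_mul, norm_div, norm_one]
        have hT' : ‖T‖ = T := by rw [Real.norm_eq_abs, abs_of_pos hT]
        rw [hT']
        rw [div_mul_eq_mul_div, one_mul, div_le_div_iff₀ hT hT]
        exact mul_le_mul_of_nonneg_right hb hT.le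
      · exact (tendsto_const_nhds (x := ‖g‖ * s)).div_atTop tendsto_id
    have h := h1.sub h2
    rw [sub_zero] at h
    exact h
  have key : ∀ᶠ T in (atTop : Filter ℝ),
      (1 / T) * (∫ t in (0:ℝ)..T, g (f t (f s x))) + G T
        = (1 / T) * ∫ t in (0:ℝ)..T, φ t := by
    filter_upwards [eventually_ge_atTop (0 : ℝ)] with T hT
    have e1 : (∫ t in (0:ℝ)..T, g (f t (f s x))) = ∫ t in (0:ℝ)..T, φ (t + s) := by
      apply intervalIntegral.integral_congr
      intro t ht
      rw [Set.uIcc_of_le hT] at ht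
      have ht0 : 0 ≤ t := ht.1
      show g (f t (f s x)) = g (f (t + s) x)
      rw [hfadd t s ht0 hs]
      rfl
    have e2 : (∫ t in (0:ℝ)..T, φ (t + s)) = ∫ t in s..(T + s), φ t := by
      rw [intervalIntegral.integral_comp_add_right, zero_add]
    have add1 : (∫ t in (0:ℝ)..T, φ t) + (∫ t in T..(T + s), φ t)
        = ∫ t in (0:ℝ)..(T + s), φ t :=
      intervalIntegral.integral_add_adjacent_intervals (hint 0 T le_rfl hT)
        (hint T (T + s) hT (by linarith))
    have add2 : (∫ t in (0:ℝ)..s, φ t) + (∫ t in s..(T + s), φ t)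
        = ∫ t in (0:ℝ)..(T + s), φ t :=
      intervalIntegral.integral_add_adjacent_intervals (hint 0 s le_rfl hs)
        (hint s (T + s) hs (by linarith))
    rw [e1, e2, hG]
    have hlin : (∫ t in s..(T + s), φ t) + (∫ t in (0:ℝ)..s, φ t)
        - (∫ t in T..(T + s), φ t) = ∫ t in (0:ℝ)..T, φ t := by linarith
    calc (1 / T) * (∫ t in s..(T + s), φ t) +
          ((1 / T) * (∫ t in (0:ℝ)..s, φ t) - (1 / T) * ∫ t in T..(T + s), φ t)
        = (1 / T) * ((∫ t in s..(T + s), φ t) + (∫ t in (0:ℝ)..s, φ t)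
            - (∫ t in T..(T + s), φ t)) := by ring
      _ = (1 / T) * ∫ t in (0:ℝ)..T, φ t := by rw [hlin]
  have := (hI.add hG0).congr' key
  simpa using this

/-- Null sets have null preimages under the semiflow, by (H) and Lindelöf. -/
lemma null_preimage_of_cover {X : Type*} [MetricSpace X]
    [SecondCountableTopology X] [MeasurableSpace X]
    (m : Measure X) (f : ℝ → X → X)
    (hcover : ∀ x : X, ∃ V : Set X, IsOpen V ∧ x ∈ V ∧
      ∀ t : ℝ, 0 ≤ t → ∃ D : ℝ≥0, ∀ S : Set X, MeasurableSet S →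
        m (V ∩ f t ⁻¹' S) ≤ (D : ℝ≥0∞) * m S)
    {t : ℝ} (ht : 0 ≤ t) {S : Set X} (hS : MeasurableSet S) (hS0 : m S = 0) :
    m (f t ⁻¹' S) = 0 := by
  choose V hVopen hVmem hVD using hcover
  obtain ⟨T, hTc, hTU⟩ := TopologicalSpace.isOpen_iUnion_countable V hVopen
  have hUuniv : ⋃ i ∈ T, V i = Set.univ := by
    rw [hTU]
    exact Set.eq_univ_of_forall fun x => Set.mem_iUnion.mpr ⟨x, hVmem x⟩
  have hsub : f t ⁻¹' S ⊆ ⋃ i ∈ T, (V i ∩ f t ⁻¹' S) := by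
    intro x hx
    have hxu : x ∈ ⋃ i ∈ T, V i := hUuniv ▸ Set.mem_univ x
    obtain ⟨i, hiT, hiV⟩ := Set.mem_iUnion₂.mp hxu
    exact Set.mem_iUnion₂.mpr ⟨i, hiT, hiV, hx⟩
  refine le_antisymm ?_ zero_le
  calc m (f t ⁻¹' S) ≤ ∑' i : T, m (V i ∩ f t ⁻¹' S) :=
        (measure_mono hsub).trans (measure_biUnion_le m hTc _)
    _ = 0 := by
        refine ENNReal.tsum_eq_zero.mpr fun i => ?_
        obtain ⟨D, hD⟩ := hVD i t ht
        have := hD S hS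
        rwa [hS0, mul_zero, le_zero_iff] at this

/-- Under the standing setup, let `μ` be a Borel probability measure
whose support is an attractor. Then `μ` is physical if and only if `Basin(μ)` includes
`m`-almost all points of `Basin(supp μ)`. -/
theorem stmt_10 {X : Type*} [MetricSpace X] [TopologicalSpace.SeparableSpace X]
    [MeasurableSpace X] [BorelSpace X]
    (m : Measure X) [IsLocallyFiniteMeasure m] [m.IsOpenPosMeasure]
    (f : ℝ → X → X)
    (hf0 : f 0 = id)
    (hfadd : ∀ s t : ℝ, 0 ≤ s → 0 ≤ t → f (s + t) = f s ∘ f t)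
    (hcont : ContinuousOn (fun p : ℝ × X => f p.1 p.2) (Set.Ici 0 ×ˢ Set.univ))
    (hcover : ∀ x : X, ∃ V : Set X, IsOpen V ∧ x ∈ V ∧
      ∀ t : ℝ, 0 ≤ t → ∃ D : ℝ≥0, ∀ S : Set X, MeasurableSet S →
        m (V ∩ f t ⁻¹' S) ≤ (D : ℝ≥0∞) * m S)
    (μ : Measure X) [IsProbabilityMeasure μ]
    (hne : (msupp μ).Nonempty) (hcomp : IsCompact (msupp μ))
    (hinv : ∀ t : ℝ, 0 ≤ t → f t '' (msupp μ) = msupp μ)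
    (hattr : ∃ V : Set X, IsOpen V ∧ msupp μ ⊆ V ∧ V ⊆ basinSet f (msupp μ)) :
    PhysicalMeasure m f μ ↔ m (basinSet f (msupp μ) \ basinOf f μ) = 0 := by
  haveI : SecondCountableTopology X :=
    UniformSpace.secondCountable_of_separable X
  constructor
  · rintro ⟨_, _, U, hUopen, hUsub, hUnull⟩
    obtain ⟨δ, hδ, hthick⟩ := hcomp.exists_thickening_subset_open hUopen hUsub
    set S := toMeasurable m (U \ basinOf f μ) with hSdef
    have hS0 : m S = 0 := by rw [hSdef, measure_toMeasurable]; exact hUnull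
    have hsub : basinSet f (msupp μ) \ basinOf f μ ⊆ ⋃ n : ℕ, f (n : ℝ) ⁻¹' S := by
      rintro x ⟨hx1, hx2⟩
      have hx1' : Tendsto (fun t : ℝ => infDist (f t x) (msupp μ)) atTop (𝓝 0) := hx1
      have hev : ∀ᶠ t : ℝ in atTop, infDist (f t x) (msupp μ) < δ :=
        hx1'.eventually_lt_const hδ
      obtain ⟨a, ha⟩ := eventually_atTop.mp hev
      set n : ℕ := ⌈a⌉₊ with hn
      have hna : a ≤ (n : ℝ) := Nat.le_ceil a
      have hinf := ha (n : ℝ) hna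
      have hU' : f (n : ℝ) x ∈ U :=
        hthick ((Metric.mem_thickening_iff_infDist_lt hne).mpr hinf)
      have hnb : f (n : ℝ) x ∉ basinOf f μ := fun h =>
        hx2 (shift_mem_basinOf hfadd hcont μ (Nat.cast_nonneg n) h)
      exact Set.mem_iUnion.mpr ⟨n, subset_toMeasurable m _ ⟨hU', hnb⟩⟩
    refine le_antisymm ?_ zero_le
    calc m (basinSet f (msupp μ) \ basinOf f μ)
        ≤ m (⋃ n : ℕ, f (n : ℝ) ⁻¹' S) := measure_mono hsub
      _ ≤ ∑' n : ℕ, m (f (n : ℝ) ⁻¹' S) := measure_iUnion_le _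
      _ = 0 := by
          have : ∀ n : ℕ, m (f (n : ℝ) ⁻¹' S) = 0 := fun n =>
            null_preimage_of_cover m f hcover (Nat.cast_nonneg n)
              (measurableSet_toMeasurable m _) hS0
          simp [this]
  · intro h
    obtain ⟨V, hVopen, hVsub, hVbasin⟩ := hattr
    refine ⟨inferInstance, hcomp, V, hVopen, hVsub, measure_mono_null ?_ h⟩
    intro x hx
    exact ⟨hVbasin hx.1, hx.2⟩
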